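/- For a finite connected graph G with unit edge weights, the sum of effective resistances over all edges equals n − 1, where n is the number of vertices: ∑_{e∈E} R_eff(e) = n − 1. -/

import Mathlib

open Matrix

/-- `P` is the Moore–Penrose pseudoinverse of `M`. -/
def IsMoorePenroseInverse {V : Type*} [Fintype V] (M P : Matrix V V ℝ) : Prop :=
  M * P * M = M ∧ P * M * P = P ∧ (M * P)ᵀ = M * P ∧ (P * M)ᵀ = P * M

/-- Effective resistance between `u` and `v` from a pseudoinverse `P` of the Laplacian. -/
noncomputable def effRes {V : Type*} [Fintype V] [DecidableEq V]
    (P : Matrix V V ℝ) (u v : V) : ℝ :=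
  (Pi.single u (1:ℝ) - Pi.single v 1) ⬝ᵥ (P *ᵥ (Pi.single u (1:ℝ) - Pi.single v 1))

lemma effRes_eq {V : Type*} [Fintype V] [DecidableEq V] (P : Matrix V V ℝ) (u v : V) :
    effRes P u v = P u u - P u v - P v u + P v v := by
  simp [effRes, sub_dotProduct, mulVec_sub, dotProduct_sub, single_dotProduct, mulVec_single]
  ring

lemma trace_eq_rank {V : Type*} [Fintype V] [DecidableEq V]
    (L P : Matrix V V ℝ) (h1 : L * P * L = L) :
    Matrix.trace (L * P) = (L.rank : ℝ) := by
  set f := Matrix.toLin' (L * P) with hf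
  have hidem : f ∘ₗ f = f := by
    rw [hf, ← Matrix.toLin'_mul]
    congr 1
    rw [← Matrix.mul_assoc, h1]
  have hproj : LinearMap.IsProj (LinearMap.range f) f := by
    constructor
    · intro x; exact LinearMap.mem_range_self f x
    · rintro x ⟨y, rfl⟩
      exact congrFun (congrArg DFunLike.coe hidem) y
  have htr : LinearMap.trace ℝ (V → ℝ) f = (Module.finrank ℝ (LinearMap.range f) : ℝ) :=
    hproj.trace
  have h2 : LinearMap.trace ℝ (V → ℝ) f = Matrix.trace (L * P) := by
    rw [LinearMap.trace_eq_matrix_trace ℝ (Pi.basisFun ℝ V) f,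
      LinearMap.toMatrix_eq_toMatrix', hf, LinearMap.toMatrix'_toLin']
  have hrk : Module.finrank ℝ (LinearMap.range f) = (L * P).rank := by
    rw [Matrix.rank, hf, Matrix.toLin'_apply']
  have hrank : (L * P).rank = L.rank := by
    refine le_antisymm (Matrix.rank_mul_le_left L P) ?_
    calc L.rank = (L * P * L).rank := by rw [h1]
    _ ≤ (L * P).rank := Matrix.rank_mul_le_left _ L
  rw [← h2, htr, hrk, hrank]

lemma rank_lapMatrix_of_connected {V : Type*} [Fintype V] [DecidableEq V]
    (G : SimpleGraph V) [DecidableRel G.Adj] (hconn : G.Connected) :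
    ((G.lapMatrix ℝ).rank : ℝ) = (Fintype.card V : ℝ) - 1 := by
  have hne : Nonempty V := hconn.nonempty
  have hker : Module.finrank ℝ (LinearMap.ker (Matrix.toLin' (G.lapMatrix ℝ))) = 1 := by
    rw [← G.card_connectedComponent_eq_finrank_ker_toLin'_lapMatrix]
    have hs : Subsingleton G.ConnectedComponent :=
      hconn.preconnected.subsingleton_connectedComponent
    have hn : Inhabited G.ConnectedComponent := ⟨G.connectedComponentMk (Classical.arbitrary V)⟩
    exact Fintype.card_eq_one_iff_nonempty_unique.mpr ⟨Unique.mk' _⟩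
  have h := LinearMap.finrank_range_add_finrank_ker (Matrix.toLin' (G.lapMatrix ℝ))
  rw [hker] at h
  have hrk : (G.lapMatrix ℝ).rank
      = Module.finrank ℝ (LinearMap.range (Matrix.toLin' (G.lapMatrix ℝ))) := by
    rw [Matrix.rank, Matrix.toLin'_apply']
  have hcard : Module.finrank ℝ (V → ℝ) = Fintype.card V := Module.finrank_pi ℝ
  rw [hcard] at h
  have h1 : 1 ≤ Fintype.card V := Fintype.card_pos
  rw [hrk]
  have : Module.finrank ℝ (LinearMap.range (Matrix.toLin' (G.lapMatrix ℝ)))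
      = Fintype.card V - 1 := by omega
  rw [this, Nat.cast_sub h1, Nat.cast_one]

lemma sum_eq_two_trace {V : Type*} [Fintype V] [DecidableEq V]
    (G : SimpleGraph V) [DecidableRel G.Adj] (P : Matrix V V ℝ) :
    ∑ u : V, ∑ v : V, (if G.Adj u v then P u u - P u v - P v u + P v v else 0)
      = 2 * Matrix.trace (G.lapMatrix ℝ * P) := by
  have htr : Matrix.trace (G.lapMatrix ℝ * P)
      = ∑ u : V, ∑ v : V, (if G.Adj u v then P u u - P v u else 0) := by
    rw [Matrix.trace]
    simp only [Matrix.diag_apply, Matrix.mul_apply]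
    refine Finset.sum_congr rfl fun u _ => ?_
    have : ∀ v : V, (G.lapMatrix ℝ) u v * P v u =
        (if u = v then (G.degree u : ℝ) * P u u else 0) - (if G.Adj u v then P v u else 0) := by
      intro v
      simp only [SimpleGraph.lapMatrix, SimpleGraph.degMatrix, SimpleGraph.adjMatrix_apply,
        Matrix.sub_apply, Matrix.diagonal_apply]
      by_cases h : u = v
      · subst h; simp [G.irrefl]
      · simp [h]
    simp_rw [this, Finset.sum_sub_distrib, Finset.sum_ite_eq, Finset.mem_univ, if_true]
    rw [G.degree_eq_sum_if_adj (R := ℝ) u, Finset.sum_mul]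
    rw [← Finset.sum_sub_distrib]
    refine Finset.sum_congr rfl fun v _ => ?_
    by_cases h : G.Adj u v <;> simp [h]
  rw [htr, two_mul]
  have hswap : ∑ u : V, ∑ v : V, (if G.Adj u v then P u u - P v u else 0)
      = ∑ u : V, ∑ v : V, (if G.Adj u v then P v v - P u v else 0) := by
    rw [Finset.sum_comm]
    refine Finset.sum_congr rfl fun u _ => Finset.sum_congr rfl fun v _ => ?_
    rw [if_congr (G.adj_comm v u) rfl rfl]
  nth_rewrite 2 [hswap]
  rw [← Finset.sum_add_distrib]
  refine Finset.sum_congr rfl fun u _ => ?_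
  rw [← Finset.sum_add_distrib]
  refine Finset.sum_congr rfl fun v _ => ?_
  by_cases h : G.Adj u v <;> simp [h]; ring

/-- **Foster's theorem**: the sum of the effective resistances over all edges of a finite
connected graph with unit edge weights equals `n - 1` (each unordered edge is counted
twice in the double sum, hence the factor `1/2`). -/
theorem foster_sum_effRes {V : Type*} [Fintype V] [DecidableEq V]
    (G : SimpleGraph V) [DecidableRel G.Adj] (hconn : G.Connected)
    (P : Matrix V V ℝ) (hP : IsMoorePenroseInverse (G.lapMatrix ℝ) P) :
    (1 / 2) * ∑ u : V, ∑ v : V, (if G.Adj u v then effRes P u v else 0) =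
      (Fintype.card V : ℝ) - 1 := by
  simp_rw [effRes_eq]
  rw [sum_eq_two_trace G P, trace_eq_rank _ _ hP.1, rank_lapMatrix_of_connected G hconn]
  ring
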